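/- (The case D = 0.) Let {(q_i, ρ_i)}_{i=1}^N be an ensemble of qubit states (N ≥ 2) with Bloch vectors v_i and q_1 = max_i q_i. If q_i v_i = q_1 v_1 for every i, then p_guess = q_1. -/

import Mathlib

open Matrix
open scoped ComplexOrder

noncomputable section

/-- The Pauli matrix σ_X. -/
def sigmaX : Matrix (Fin 2) (Fin 2) ℂ := !![0, 1; 1, 0]

/-- The Pauli matrix σ_Y. -/
def sigmaY : Matrix (Fin 2) (Fin 2) ℂ := !![0, -Complex.I; Complex.I, 0]

/-- The Pauli matrix σ_Z. -/
def sigmaZ : Matrix (Fin 2) (Fin 2) ℂ := !![1, 0; 0, -1]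

/-- `v · σ = v₁ σ_X + v₂ σ_Y + v₃ σ_Z` for a vector `v ∈ ℝ³`. -/
def pauliDot (v : EuclideanSpace ℝ (Fin 3)) : Matrix (Fin 2) (Fin 2) ℂ :=
  (v 0 : ℂ) • sigmaX + (v 1 : ℂ) • sigmaY + (v 2 : ℂ) • sigmaZ

/-- A qubit state: a 2×2 complex positive semidefinite matrix with trace 1. -/
def IsQubitState (ρ : Matrix (Fin 2) (Fin 2) ℂ) : Prop :=
  ρ.PosSemidef ∧ ρ.trace = 1

/-- An `N`-outcome POVM: positive semidefinite matrices summing to the identity. -/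
def IsPOVM {N : ℕ} (M : Fin N → Matrix (Fin 2) (Fin 2) ℂ) : Prop :=
  (∀ i, (M i).PosSemidef) ∧ ∑ i, M i = 1

/-- The guessing probability of the ensemble `{(q i, ρ i)}`:
the supremum over all `N`-outcome POVMs of `∑ i, q i · Re (tr (ρ i * M i))`. -/
def pGuess {N : ℕ} (q : Fin N → ℝ) (ρ : Fin N → Matrix (Fin 2) (Fin 2) ℂ) : ℝ :=
  sSup {x : ℝ | ∃ M : Fin N → Matrix (Fin 2) (Fin 2) ℂ,
    IsPOVM M ∧ x = ∑ i, q i * ((ρ i * M i).trace).re}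

/-- A POVM is optimal when it attains the guessing probability. -/
def IsOptimalPOVM {N : ℕ} (q : Fin N → ℝ) (ρ M : Fin N → Matrix (Fin 2) (Fin 2) ℂ) : Prop :=
  IsPOVM M ∧ ∑ i, q i * ((ρ i * M i).trace).re = pGuess q ρ

lemma trace_pauliDot (v : EuclideanSpace ℝ (Fin 3)) : (pauliDot v).trace = 0 := by
  simp [pauliDot, sigmaX, sigmaY, sigmaZ, Matrix.trace_fin_two]

lemma pauliDot_smul (c : ℝ) (v : EuclideanSpace ℝ (Fin 3)) :
    pauliDot (c • v) = (c : ℂ) • pauliDot v := by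
  simp only [pauliDot, smul_add, smul_smul, PiLp.smul_apply, smul_eq_mul,
    Complex.ofReal_mul]

lemma psd_trace_re_nonneg {n : Type*} [Fintype n] [DecidableEq n]
    {A : Matrix n n ℂ} (hA : A.PosSemidef) : 0 ≤ (A.trace).re := by
  rw [Matrix.trace, Complex.re_sum]
  refine Finset.sum_nonneg fun j _ => ?_
  rw [Matrix.diag]
  have h := hA.dotProduct_mulVec_nonneg (Pi.single j 1)
  simp [dotProduct, Matrix.mulVec, Pi.single_apply] at h
  rw [Complex.le_def] at h
  simpa using h.1

lemma povm_value {N : ℕ} (hN : 2 ≤ N)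
    (q : Fin N → ℝ) (v : Fin N → EuclideanSpace ℝ (Fin 3))
    (ρ : Fin N → Matrix (Fin 2) (Fin 2) ℂ)
    (hρ : ∀ i, ρ i = (2⁻¹ : ℂ) • (1 + pauliDot (v i)))
    (hs : ∀ i, q i • v i = q (⟨0, Nat.lt_of_lt_of_le two_pos hN⟩ : Fin N) • v ⟨0, Nat.lt_of_lt_of_le two_pos hN⟩)
    (M : Fin N → Matrix (Fin 2) (Fin 2) ℂ) (hM : IsPOVM M) :
    ∑ i, q i * ((ρ i * M i).trace).re = 2⁻¹ * ∑ i, q i * ((M i).trace).re := by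
  set i0 : Fin N := ⟨0, by omega⟩
  have key : ∑ i, (q i : ℂ) * (ρ i * M i).trace
      = (2⁻¹ : ℂ) * ∑ i, (q i : ℂ) * (M i).trace := by
    have h1 : ∀ i, (q i : ℂ) * (ρ i * M i).trace
        = (2⁻¹ : ℂ) * ((q i : ℂ) * (M i).trace)
          + (2⁻¹ : ℂ) * (pauliDot (q i0 • v i0) * M i).trace := by
      intro i
      rw [hρ i, ← hs i, pauliDot_smul]
      simp only [Matrix.smul_mul, Matrix.add_mul, Matrix.one_mul, Matrix.trace_smul,
        Matrix.trace_add, smul_eq_mul]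
      ring
    rw [Finset.sum_congr rfl fun i _ => h1 i, Finset.sum_add_distrib,
      ← Finset.mul_sum, ← Finset.mul_sum, ← Matrix.trace_sum]
    have h2 : ∑ i, pauliDot (q i0 • v i0) * M i = pauliDot (q i0 • v i0) := by
      rw [← Finset.mul_sum, hM.2, Matrix.mul_one]
    rw [h2, pauliDot_smul, Matrix.trace_smul, trace_pauliDot]
    simp
  have hre : ∀ (f : Fin N → Matrix (Fin 2) (Fin 2) ℂ),
      ∑ i, q i * ((f i).trace).re = (∑ i, (q i : ℂ) * (f i).trace).re := by
    intro f
    rw [Complex.re_sum]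
    exact Finset.sum_congr rfl fun i _ => (Complex.re_ofReal_mul _ _).symm
  rw [hre (fun i => ρ i * M i), key]
  have : ((2⁻¹ : ℂ) * ∑ i, (q i : ℂ) * (M i).trace).re
      = 2⁻¹ * (∑ i, (q i : ℂ) * (M i).trace).re := by
    rw [show ((2⁻¹ : ℂ)) = ((2⁻¹ : ℝ) : ℂ) by norm_num, Complex.re_ofReal_mul]
  rw [this, hre (fun i => M i)]

/-- The case `D = 0`. If `q i • v i = q 0 • v 0` for every `i`
(where `q 0` is the largest prior probability), then `pGuess = q 0`. -/
theorem guessing_prob_D_zero {N : ℕ} (hN : 2 ≤ N)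
    (q : Fin N → ℝ) (v : Fin N → EuclideanSpace ℝ (Fin 3))
    (ρ : Fin N → Matrix (Fin 2) (Fin 2) ℂ)
    (hq : ∀ i, 0 < q i) (hqsum : ∑ i, q i = 1)
    (hv : ∀ i, ‖v i‖ ≤ 1)
    (hρ : ∀ i, ρ i = (2⁻¹ : ℂ) • (1 + pauliDot (v i)))
    (hmax : ∀ i, q i ≤ q ⟨0, by omega⟩)
    (hs : ∀ i, q i • v i = q (⟨0, by omega⟩ : Fin N) • v ⟨0, by omega⟩) :
    pGuess q ρ = q ⟨0, by omega⟩ := by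
  set i0 : Fin N := ⟨0, by omega⟩ with hi0
  -- the optimal POVM
  set M0 : Fin N → Matrix (Fin 2) (Fin 2) ℂ := fun i => if i = i0 then 1 else 0 with hM0
  have hM0povm : IsPOVM M0 := by
    constructor
    · intro i
      by_cases h : i = i0 <;> simp [hM0, h, Matrix.PosSemidef.zero, Matrix.PosSemidef.one]
    · simp [hM0]
  have htr1 : (1 : Matrix (Fin 2) (Fin 2) ℂ).trace = 2 := by
    simp [Matrix.trace_fin_two]
  have hval0 : ∑ i, q i * ((ρ i * M0 i).trace).re = q i0 := by
    rw [povm_value hN q v ρ hρ hs M0 hM0povm]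
    have : ∀ i, q i * ((M0 i).trace).re = if i = i0 then q i0 * 2 else 0 := by
      intro i
      by_cases h : i = i0 <;> simp [hM0, h, htr1]
    rw [Finset.sum_congr rfl fun i _ => this i, Finset.sum_ite_eq' Finset.univ i0]
    simp
    ring
  have hmem : q i0 ∈ {x : ℝ | ∃ M : Fin N → Matrix (Fin 2) (Fin 2) ℂ,
      IsPOVM M ∧ x = ∑ i, q i * ((ρ i * M i).trace).re} := ⟨M0, hM0povm, hval0.symm⟩
  have hub : ∀ x ∈ {x : ℝ | ∃ M : Fin N → Matrix (Fin 2) (Fin 2) ℂ,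
      IsPOVM M ∧ x = ∑ i, q i * ((ρ i * M i).trace).re}, x ≤ q i0 := by
    rintro x ⟨M, hM, rfl⟩
    rw [povm_value hN q v ρ hρ hs M hM]
    have htrnn : ∀ i, 0 ≤ ((M i).trace).re := by
      intro i
      exact psd_trace_re_nonneg (hM.1 i)
    have h1 : ∑ i, q i * ((M i).trace).re ≤ ∑ i, q i0 * ((M i).trace).re :=
      Finset.sum_le_sum fun i _ =>
        mul_le_mul_of_nonneg_right (hmax i) (htrnn i)
    have h2 : ∑ i, q i0 * ((M i).trace).re = q i0 * 2 := by
      rw [← Finset.mul_sum]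
      have : ∑ i, ((M i).trace).re = ((∑ i, M i).trace).re := by
        rw [Matrix.trace_sum, Complex.re_sum]
      rw [this, hM.2, htr1]
      norm_num
    linarith
  exact le_antisymm (csSup_le ⟨q i0, hmem⟩ hub) (le_csSup ⟨q i0, hub⟩ hmem)

end
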